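/- arXiv:2511.20519 — 6 statements merged into one kernel-verified Lean document; each statement's English description precedes it below -/
import Mathlib

section
/- For all real numbers p ≥ 1 and q ≥ 0 one has Γ(p+q) ≥ Γ(p) · (p−1)^q, where Γ denotes the Gamma function (with the convention 0^0 = 1). -/
/-- Auxiliary: for `1 ≤ p` and `0 < q < 1`, `Γ(p)·(p+q−1)^q ≤ Γ(p+q)`. -/
lemma gamma_aux1 (p q : ℝ) (hp : 1 ≤ p) (hq0 : 0 < q) (hq1 : q < 1) :
    Real.Gamma p * (p + q - 1) ^ q ≤ Real.Gamma (p + q) := by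
  have ht : 0 < p + q - 1 := by linarith
  have hs : 0 < p + q := by linarith
  have h := Real.Gamma_mul_add_mul_le_rpow_Gamma_mul_rpow_Gamma hs ht
    (by linarith : (0:ℝ) < 1 - q) hq0 (by ring)
  have e1 : (1 - q) * (p + q) + q * (p + q - 1) = p := by ring
  rw [e1] at h
  have hGpos : 0 < Real.Gamma (p + q) := Real.Gamma_pos_of_pos hs
  have hG1pos : 0 < Real.Gamma (p + q - 1) := Real.Gamma_pos_of_pos ht
  have hrec : Real.Gamma (p + q - 1) * (p + q - 1) = Real.Gamma (p + q) := by
    have := Real.Gamma_add_one ht.ne'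
    rw [show p + q - 1 + 1 = p + q by ring] at this
    rw [this]; ring
  calc Real.Gamma p * (p + q - 1) ^ q
      ≤ Real.Gamma (p + q) ^ (1 - q) * Real.Gamma (p + q - 1) ^ q * (p + q - 1) ^ q := by
        apply mul_le_mul_of_nonneg_right h (Real.rpow_nonneg ht.le q)
    _ = Real.Gamma (p + q) ^ (1 - q) * (Real.Gamma (p + q - 1) * (p + q - 1)) ^ q := by
        rw [Real.mul_rpow hG1pos.le ht.le]; ring
    _ = Real.Gamma (p + q) ^ (1 - q) * Real.Gamma (p + q) ^ q := by rw [hrec]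
    _ = Real.Gamma (p + q) := by
        rw [← Real.rpow_add hGpos]; simp

lemma gamma_aux2 : ∀ n : ℕ, ∀ p q : ℝ, 1 ≤ p → 0 ≤ q → q ≤ n →
    Real.Gamma p * (p - 1) ^ q ≤ Real.Gamma (p + q) := by
  intro n
  induction n with
  | zero =>
    intro p q hp hq hqn
    have : q = 0 := le_antisymm (by exact_mod_cast hqn) hq
    simp [this]
  | succ n ih =>
    intro p q hp hq hqn
    rcases le_or_gt q n with h | h
    · exact ih p q hp hq h
    have hq0 : 0 < q := lt_of_le_of_lt (Nat.cast_nonneg n) h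
    have hGp : 0 < Real.Gamma p := Real.Gamma_pos_of_pos (by linarith)
    rcases lt_trichotomy q 1 with h1 | h1 | h1
    · -- 0 < q < 1 : use gamma_aux1
      have hle : (p - 1) ^ q ≤ (p + q - 1) ^ q :=
        Real.rpow_le_rpow (by linarith) (by linarith) hq0.le
      calc Real.Gamma p * (p - 1) ^ q ≤ Real.Gamma p * (p + q - 1) ^ q :=
            mul_le_mul_of_nonneg_left hle hGp.le
        _ ≤ Real.Gamma (p + q) := gamma_aux1 p q hp hq0 h1
    · -- q = 1
      subst h1
      rw [Real.rpow_one, Real.Gamma_add_one (by positivity : p ≠ 0)]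
      nlinarith
    · -- q > 1 : recurse
      have hqn' : q - 1 ≤ n := by
        have : q ≤ (n : ℝ) + 1 := by exact_mod_cast hqn
        linarith
      have hih := ih p (q - 1) hp (by linarith) hqn'
      have ht : 0 < p + q - 1 := by linarith
      have hrec : Real.Gamma (p + q) = (p + q - 1) * Real.Gamma (p + (q - 1)) := by
        have := Real.Gamma_add_one ht.ne'
        rw [show p + q - 1 + 1 = p + q by ring] at this
        rw [this]; ring_nf
      rcases eq_or_lt_of_le hp with hp1 | hp1
      · -- p = 1 : LHS is 0
        rw [← hp1]
        simp only [sub_self]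
        rw [Real.zero_rpow hq0.ne']
        simpa using (Real.Gamma_pos_of_pos (by linarith : (0:ℝ) < 1 + q)).le
      · have hpow : (p - 1) ^ q = (p - 1) ^ (q - 1) * (p - 1) := by
          have := Real.rpow_add (show (0:ℝ) < p - 1 by linarith) (q - 1) 1
          rw [Real.rpow_one, show q - 1 + 1 = q by ring] at this
          exact this
        rw [hrec, hpow]
        have hGq : 0 ≤ Real.Gamma (p + (q - 1)) :=
          (Real.Gamma_pos_of_pos (by linarith)).le
        calc Real.Gamma p * ((p - 1) ^ (q - 1) * (p - 1))
            = (p - 1) * (Real.Gamma p * (p - 1) ^ (q - 1)) := by ring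
          _ ≤ (p - 1) * Real.Gamma (p + (q - 1)) :=
              mul_le_mul_of_nonneg_left hih (by linarith)
          _ ≤ (p + q - 1) * Real.Gamma (p + (q - 1)) :=
              mul_le_mul_of_nonneg_right (by linarith) hGq

/-- For real `p ≥ 1` and `q ≥ 0` one has `Γ(p+q) ≥ Γ(p)·(p−1)^q`
(with the convention `0^0 = 1`, which holds for `Real.rpow`). -/
theorem gamma_add_ge (p q : ℝ) (hp : 1 ≤ p) (hq : 0 ≤ q) :
    Real.Gamma p * (p - 1) ^ q ≤ Real.Gamma (p + q) := by
  exact gamma_aux2 ⌈q⌉₊ p q hp hq (Nat.le_ceil q)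
end

section
/- Let p, q > 0, let μ = p/(p+q), and let x ∈ ℝ. Let I_x(p,q) denote the regularized incomplete Beta function, extended by I_x(p,q) = 0 for x < 0 and I_x(p,q) = 1 for x > 1. Then: if x < μ, then I_x(p,q) ≤ 1/( p (x/μ − 1)² ); and if x > μ, then I_x(p,q) ≥ 1 − 1/( p (x/μ − 1)² ). -/
open MeasureTheory Set

namespace RegIncBetaAux

lemma integrand_eq {r q u : ℝ} (h0 : 0 ≤ u) (h1 : u ≤ 1) :
    ((u:ℂ) ^ ((r:ℂ) - 1) * (1 - (u:ℂ)) ^ ((q:ℂ) - 1)) =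
      ((u ^ (r - 1) * (1 - u) ^ (q - 1) : ℝ) : ℂ) := by
  rw [Complex.ofReal_mul, Complex.ofReal_cpow h0, Complex.ofReal_cpow (by linarith)]
  push_cast
  ring_nf

lemma integrableOn_Ioo {r q : ℝ} (hr : 0 < r) (hq : 0 < q) :
    IntegrableOn (fun u : ℝ => u ^ (r - 1) * (1 - u) ^ (q - 1)) (Ioo 0 1) := by
  have hc : IntervalIntegrable
      (fun x : ℝ => (x:ℂ) ^ ((r:ℂ) - 1) * (1 - (x:ℂ)) ^ ((q:ℂ) - 1)) volume 0 1 :=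
    Complex.betaIntegral_convergent (by simpa) (by simpa)
  have h1 : IntegrableOn
      (fun x : ℝ => (x:ℂ) ^ ((r:ℂ) - 1) * (1 - (x:ℂ)) ^ ((q:ℂ) - 1)) (Ioo 0 1) :=
    ((intervalIntegrable_iff_integrableOn_Ioc_of_le (by norm_num)).mp hc).mono_set
      Ioo_subset_Ioc_self
  have h2 : IntegrableOn
      (fun x : ℝ => ((x ^ (r - 1) * (1 - x) ^ (q - 1) : ℝ) : ℂ)) (Ioo 0 1) := by
    refine h1.congr_fun (fun x hx => integrand_eq hx.1.le hx.2.le) measurableSet_Ioo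
  simpa [IntegrableOn] using h2.re

lemma betaInt_eq {r q : ℝ} (hr : 0 < r) (hq : 0 < q) :
    ∫ u in Ioo (0:ℝ) 1, u ^ (r - 1) * (1 - u) ^ (q - 1) =
      Real.Gamma r * Real.Gamma q / Real.Gamma (r + q) := by
  have key : Complex.Gamma r * Complex.Gamma q =
      Complex.Gamma (r + q) * Complex.betaIntegral r q :=
    Complex.Gamma_mul_Gamma_eq_betaIntegral (by simpa) (by simpa)
  have hBc : Complex.betaIntegral r q =
      ((∫ u in Ioo (0:ℝ) 1, u ^ (r - 1) * (1 - u) ^ (q - 1) : ℝ) : ℂ) := by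
    rw [Complex.betaIntegral]
    rw [show (∫ u in Ioo (0:ℝ) 1, u ^ (r - 1) * (1 - u) ^ (q - 1)) =
        ∫ u in (0:ℝ)..1, u ^ (r - 1) * (1 - u) ^ (q - 1) by
      rw [intervalIntegral.integral_of_le (by norm_num), integral_Ioc_eq_integral_Ioo]]
    rw [← intervalIntegral.integral_ofReal]
    refine intervalIntegral.integral_congr fun x hx => ?_
    rw [uIcc_of_le (by norm_num : (0:ℝ) ≤ 1)] at hx
    exact integrand_eq hx.1 hx.2
  have hG : Complex.Gamma ((r : ℂ) + q) ≠ 0 := by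
    rw [show ((r:ℂ) + q) = ((r + q : ℝ) : ℂ) by push_cast; ring, Complex.Gamma_ofReal]
    exact_mod_cast (Real.Gamma_pos_of_pos (by linarith)).ne'
  rw [hBc] at key
  have : ((Real.Gamma r * Real.Gamma q / Real.Gamma (r + q) : ℝ) : ℂ) =
      ((∫ u in Ioo (0:ℝ) 1, u ^ (r - 1) * (1 - u) ^ (q - 1) : ℝ) : ℂ) := by
    push_cast
    rw [← Complex.Gamma_ofReal, ← Complex.Gamma_ofReal, ← Complex.Gamma_ofReal]
    push_cast
    rw [div_eq_iff hG, key]; ring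
  exact_mod_cast this.symm

end RegIncBetaAux

namespace RegIncBetaAux

lemma pointwise_expand {p q u : ℝ} (hu : 0 < u) (c : ℝ) :
    u ^ (p + 2 - 1) * (1 - u) ^ (q - 1) - 2 * c * (u ^ (p + 1 - 1) * (1 - u) ^ (q - 1))
      + c ^ 2 * (u ^ (p - 1) * (1 - u) ^ (q - 1))
    = u ^ (p - 1) * (1 - u) ^ (q - 1) * (u - c) ^ 2 := by
  rw [show p + 2 - 1 = (p - 1) + 2 by ring, show p + 1 - 1 = (p - 1) + 1 by ring,
    Real.rpow_add hu, Real.rpow_add hu, Real.rpow_one,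
    show (2:ℝ) = ((2:ℕ):ℝ) by norm_num, Real.rpow_natCast]
  ring

lemma integrableOn_moment {p q : ℝ} (hp : 0 < p) (hq : 0 < q) (c : ℝ) :
    IntegrableOn (fun u : ℝ => u ^ (p - 1) * (1 - u) ^ (q - 1) * (u - c) ^ 2) (Ioo 0 1) := by
  have h : IntegrableOn (fun u : ℝ => u ^ (p + 2 - 1) * (1 - u) ^ (q - 1)
      - 2 * c * (u ^ (p + 1 - 1) * (1 - u) ^ (q - 1))
      + c ^ 2 * (u ^ (p - 1) * (1 - u) ^ (q - 1))) (Ioo 0 1) :=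
    (((integrableOn_Ioo (by linarith : (0:ℝ) < p + 2) hq).sub
      ((integrableOn_Ioo (by linarith : (0:ℝ) < p + 1) hq).const_mul (2 * c))).add
      ((integrableOn_Ioo hp hq).const_mul (c ^ 2)))
  exact h.congr_fun (fun u hu => pointwise_expand hu.1 c) measurableSet_Ioo

lemma ratio {r q : ℝ} (hr : 0 < r) (hq : 0 < q) :
    ∫ u in Ioo (0:ℝ) 1, u ^ (r + 1 - 1) * (1 - u) ^ (q - 1) =
      r / (r + q) * ∫ u in Ioo (0:ℝ) 1, u ^ (r - 1) * (1 - u) ^ (q - 1) := by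
  rw [betaInt_eq (by linarith) hq, betaInt_eq hr hq,
    Real.Gamma_add_one hr.ne', show r + 1 + q = (r + q) + 1 by ring,
    Real.Gamma_add_one (by positivity : r + q ≠ 0)]
  have h1 := Real.Gamma_pos_of_pos (show (0:ℝ) < r + q by linarith)
  field_simp

lemma second_moment {p q : ℝ} (hp : 0 < p) (hq : 0 < q) :
    ∫ u in Ioo (0:ℝ) 1, u ^ (p - 1) * (1 - u) ^ (q - 1) * (u - p / (p + q)) ^ 2 =
      (p * q / ((p + q) ^ 2 * (p + q + 1))) *
        ∫ u in Ioo (0:ℝ) 1, u ^ (p - 1) * (1 - u) ^ (q - 1) := by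
  set c := p / (p + q) with hc
  have hsplit : ∫ u in Ioo (0:ℝ) 1, u ^ (p - 1) * (1 - u) ^ (q - 1) * (u - c) ^ 2 =
      (∫ u in Ioo (0:ℝ) 1, u ^ (p + 2 - 1) * (1 - u) ^ (q - 1)) -
      (2 * c) * (∫ u in Ioo (0:ℝ) 1, u ^ (p + 1 - 1) * (1 - u) ^ (q - 1)) +
      c ^ 2 * (∫ u in Ioo (0:ℝ) 1, u ^ (p - 1) * (1 - u) ^ (q - 1)) := by
    rw [← setIntegral_congr_fun measurableSet_Ioo (fun u hu => pointwise_expand hu.1 c),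
      ← integral_const_mul, ← integral_const_mul, ← integral_sub, ← integral_add]
    · exact (integrableOn_Ioo (by linarith : (0:ℝ) < p + 2) hq).sub
        ((integrableOn_Ioo (by linarith : (0:ℝ) < p + 1) hq).const_mul _)
    · exact (integrableOn_Ioo hp hq).const_mul _
    · exact integrableOn_Ioo (by linarith : (0:ℝ) < p + 2) hq
    · exact (integrableOn_Ioo (by linarith : (0:ℝ) < p + 1) hq).const_mul _
  rw [hsplit, show p + 2 - 1 = (p + 1) + 1 - 1 by ring,
    ratio (by linarith : (0:ℝ) < p + 1) hq, ratio hp hq]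
  have h1 : (0:ℝ) < p + q := by linarith
  have h2 : (0:ℝ) < p + 1 + q := by linarith
  rw [hc]
  field_simp
  ring

end RegIncBetaAux

namespace RegIncBetaAux

lemma bound_aux {p q x : ℝ} (hp : 0 < p) (hq : 0 < q) (hx : x ≠ p / (p + q)) :
    p * q / ((p + q) ^ 2 * (p + q + 1)) / (x - p / (p + q)) ^ 2
      ≤ 1 / (p * (x / (p / (p + q)) - 1) ^ 2) := by
  have h1 : 0 < p + q := by linarith
  have hd0 : x - p / (p + q) ≠ 0 := sub_ne_zero.mpr hx
  rw [show x / (p / (p + q)) - 1 = (p + q) * (x - p / (p + q)) / p by field_simp]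
  set d := x - p / (p + q) with hdd
  have hd : 0 < d ^ 2 := by positivity
  rw [div_div, div_le_div_iff₀ (by positivity) (by positivity)]
  rw [show p * q * (p * ((p + q) * d / p) ^ 2) = q * ((p + q) ^ 2 * d ^ 2) by
    field_simp]
  nlinarith [mul_pos (mul_pos hp h1) (mul_pos h1 hd), sq_nonneg (p + q), mul_pos h1 hd]

end RegIncBetaAux

/-- The regularized incomplete Beta function `I_x(p,q) = B_x(p,q)/B(p,q)`,
extended by `0` for `x < 0` and by `1` for `x > 1`. -/
noncomputable def regIncBeta (p q x : ℝ) : ℝ :=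
  (∫ u in Set.Ioo (0 : ℝ) (min x 1), u ^ (p - 1) * (1 - u) ^ (q - 1)) /
    (∫ u in Set.Ioo (0 : ℝ) 1, u ^ (p - 1) * (1 - u) ^ (q - 1))

open RegIncBetaAux in
/-- Chebyshev-type bounds for the regularized incomplete Beta function: with
`μ = p/(p+q)`, one has `I_x(p,q) ≤ 1/(p (x/μ − 1)²)` for `x < μ` and
`I_x(p,q) ≥ 1 − 1/(p (x/μ − 1)²)` for `x > μ`. -/
theorem regIncBeta_chebyshev (p q x : ℝ) (hp : 0 < p) (hq : 0 < q) :
    (x < p / (p + q) → regIncBeta p q x ≤ 1 / (p * (x / (p / (p + q)) - 1) ^ 2)) ∧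
    (p / (p + q) < x → 1 - 1 / (p * (x / (p / (p + q)) - 1) ^ 2) ≤ regIncBeta p q x) := by
  have h1 : 0 < p + q := by linarith
  have hμ0 : 0 < p / (p + q) := by positivity
  have hμ1 : p / (p + q) < 1 := by rw [div_lt_one h1]; linarith
  have hfint : IntegrableOn (fun u : ℝ => u ^ (p - 1) * (1 - u) ^ (q - 1)) (Ioo 0 1) :=
    integrableOn_Ioo hp hq
  have hB : 0 < ∫ u in Ioo (0:ℝ) 1, u ^ (p - 1) * (1 - u) ^ (q - 1) := by
    rw [betaInt_eq hp hq]
    exact div_pos (mul_pos (Real.Gamma_pos_of_pos hp) (Real.Gamma_pos_of_pos hq))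
      (Real.Gamma_pos_of_pos (by linarith))
  have hM := second_moment hp hq
  have hg_int : IntegrableOn
      (fun u : ℝ => u ^ (p - 1) * (1 - u) ^ (q - 1) * (u - p / (p + q)) ^ 2) (Ioo 0 1) :=
    integrableOn_moment hp hq _
  have hfnn : ∀ u ∈ Ioo (0:ℝ) 1, 0 ≤ u ^ (p - 1) * (1 - u) ^ (q - 1) := fun u hu =>
    mul_nonneg (Real.rpow_nonneg hu.1.le _) (Real.rpow_nonneg (by linarith [hu.2]) _)
  have hVnn : 0 ≤ p * q / ((p + q) ^ 2 * (p + q + 1)) := by positivity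
  constructor
  · -- x < μ
    intro hx
    have hxμ : x ≠ p / (p + q) := ne_of_lt hx
    have hd0 : x - p / (p + q) ≠ 0 := sub_ne_zero.mpr hxμ
    have hd : 0 < (x - p / (p + q)) ^ 2 := by positivity
    have key : regIncBeta p q x ≤
        p * q / ((p + q) ^ 2 * (p + q + 1)) / (x - p / (p + q)) ^ 2 := by
      rcases le_or_gt x 0 with h0 | h0
      · have hmin : Ioo (0:ℝ) (min x 1) = ∅ :=
          Ioo_eq_empty (not_lt.mpr ((min_le_left x 1).trans h0))
        rw [regIncBeta, hmin]
        simp only [Measure.restrict_empty, integral_zero_measure, zero_div]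
        positivity
      · have hmin : min x 1 = x := min_eq_left (by linarith)
        rw [regIncBeta, hmin]
        have hsub : Ioo (0:ℝ) x ⊆ Ioo (0:ℝ) 1 := Ioo_subset_Ioo le_rfl (by linarith)
        have step1 : (∫ u in Ioo (0:ℝ) x, u ^ (p - 1) * (1 - u) ^ (q - 1)) ≤
            ∫ u in Ioo (0:ℝ) x,
              u ^ (p - 1) * (1 - u) ^ (q - 1) * (u - p / (p + q)) ^ 2
                / (x - p / (p + q)) ^ 2 := by
          refine setIntegral_mono_on (hfint.mono_set hsub)
            ((hg_int.mono_set hsub).div_const _) measurableSet_Ioo fun u hu => ?_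
          have h2 : (x - p / (p + q)) ^ 2 ≤ (u - p / (p + q)) ^ 2 := by
            nlinarith [hu.1, hu.2]
          have h3 := hfnn u ⟨hu.1, by linarith [hu.2]⟩
          rw [le_div_iff₀ hd]
          nlinarith
        have step2 : (∫ u in Ioo (0:ℝ) x,
              u ^ (p - 1) * (1 - u) ^ (q - 1) * (u - p / (p + q)) ^ 2
                / (x - p / (p + q)) ^ 2) ≤
            ∫ u in Ioo (0:ℝ) 1,
              u ^ (p - 1) * (1 - u) ^ (q - 1) * (u - p / (p + q)) ^ 2
                / (x - p / (p + q)) ^ 2 := by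
          refine setIntegral_mono_set (hg_int.div_const _) ?_ hsub.eventuallyLE
          filter_upwards [ae_restrict_mem measurableSet_Ioo] with u hu
          exact div_nonneg (mul_nonneg (hfnn u hu) (sq_nonneg _)) hd.le
        have step3 : (∫ u in Ioo (0:ℝ) 1,
              u ^ (p - 1) * (1 - u) ^ (q - 1) * (u - p / (p + q)) ^ 2
                / (x - p / (p + q)) ^ 2) =
            p * q / ((p + q) ^ 2 * (p + q + 1)) / (x - p / (p + q)) ^ 2 *
              ∫ u in Ioo (0:ℝ) 1, u ^ (p - 1) * (1 - u) ^ (q - 1) := by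
          rw [integral_div, hM]; ring
        have := (step1.trans (step2.trans_eq step3))
        rw [div_le_iff₀ hB]
        exact this
    exact key.trans (bound_aux hp hq hxμ)
  · -- μ < x
    intro hx
    have hxμ : x ≠ p / (p + q) := (ne_of_gt hx)
    have hd0 : x - p / (p + q) ≠ 0 := sub_ne_zero.mpr hxμ
    have hd : 0 < (x - p / (p + q)) ^ 2 := by positivity
    rcases le_or_gt 1 x with h1x | h1x
    · have hmin : min x 1 = 1 := min_eq_right h1x
      rw [regIncBeta, hmin, div_self hB.ne']
      have : 0 ≤ 1 / (p * (x / (p / (p + q)) - 1) ^ 2) := by positivity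
      linarith
    · have h0x : 0 < x := lt_trans hμ0 hx
      have hmin : min x 1 = x := min_eq_left h1x.le
      have hsub1 : Ioo (0:ℝ) x ⊆ Ioo (0:ℝ) 1 := Ioo_subset_Ioo le_rfl h1x.le
      have hsub2 : Ico x 1 ⊆ Ioo (0:ℝ) 1 := fun u hu => ⟨lt_of_lt_of_le h0x hu.1, hu.2⟩
      have hdisj : Disjoint (Ioo (0:ℝ) x) (Ico x 1) :=
        (Iio_disjoint_Ici (le_refl x)).mono Ioo_subset_Iio_self Ico_subset_Ici_self
      have hsplit : (∫ u in Ioo (0:ℝ) 1, u ^ (p - 1) * (1 - u) ^ (q - 1)) =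
          (∫ u in Ioo (0:ℝ) x, u ^ (p - 1) * (1 - u) ^ (q - 1)) +
          ∫ u in Ico x 1, u ^ (p - 1) * (1 - u) ^ (q - 1) := by
        rw [← Ioo_union_Ico_eq_Ioo h0x h1x.le,
          setIntegral_union hdisj measurableSet_Ico (hfint.mono_set hsub1)
            (hfint.mono_set hsub2)]
      have step1 : (∫ u in Ico x 1, u ^ (p - 1) * (1 - u) ^ (q - 1)) ≤
          ∫ u in Ico x 1,
            u ^ (p - 1) * (1 - u) ^ (q - 1) * (u - p / (p + q)) ^ 2
              / (x - p / (p + q)) ^ 2 := by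
        refine setIntegral_mono_on (hfint.mono_set hsub2)
          ((hg_int.mono_set hsub2).div_const _) measurableSet_Ico fun u hu => ?_
        have h2 : (x - p / (p + q)) ^ 2 ≤ (u - p / (p + q)) ^ 2 := by
          nlinarith [hu.1, hu.2]
        have h3 := hfnn u (hsub2 hu)
        rw [le_div_iff₀ hd]
        nlinarith
      have step2 : (∫ u in Ico x 1,
            u ^ (p - 1) * (1 - u) ^ (q - 1) * (u - p / (p + q)) ^ 2
              / (x - p / (p + q)) ^ 2) ≤
          ∫ u in Ioo (0:ℝ) 1,
            u ^ (p - 1) * (1 - u) ^ (q - 1) * (u - p / (p + q)) ^ 2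
              / (x - p / (p + q)) ^ 2 := by
        refine setIntegral_mono_set (hg_int.div_const _) ?_ hsub2.eventuallyLE
        filter_upwards [ae_restrict_mem measurableSet_Ioo] with u hu
        exact div_nonneg (mul_nonneg (hfnn u hu) (sq_nonneg _)) hd.le
      have step3 : (∫ u in Ioo (0:ℝ) 1,
            u ^ (p - 1) * (1 - u) ^ (q - 1) * (u - p / (p + q)) ^ 2
              / (x - p / (p + q)) ^ 2) =
          p * q / ((p + q) ^ 2 * (p + q + 1)) / (x - p / (p + q)) ^ 2 *
            ∫ u in Ioo (0:ℝ) 1, u ^ (p - 1) * (1 - u) ^ (q - 1) := by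
        rw [integral_div, hM]; ring
      have hT : (∫ u in Ico x 1, u ^ (p - 1) * (1 - u) ^ (q - 1)) /
          (∫ u in Ioo (0:ℝ) 1, u ^ (p - 1) * (1 - u) ^ (q - 1)) ≤
          p * q / ((p + q) ^ 2 * (p + q + 1)) / (x - p / (p + q)) ^ 2 := by
        rw [div_le_iff₀ hB]
        exact step1.trans (step2.trans_eq step3)
      have heq : regIncBeta p q x = 1 -
          (∫ u in Ico x 1, u ^ (p - 1) * (1 - u) ^ (q - 1)) /
          (∫ u in Ioo (0:ℝ) 1, u ^ (p - 1) * (1 - u) ^ (q - 1)) := by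
        rw [regIncBeta, hmin, eq_sub_iff_add_eq, ← add_div, ← hsplit,
          div_self hB.ne']
      rw [heq]
      have := hT.trans (bound_aux hp hq hxμ)
      linarith
end

section
/- Let (p_n), (q_n) be sequences of positive reals and (x_n) a sequence of reals, and set μ_n = p_n/(p_n + q_n). If x_n/μ_n → ∞ as n → ∞ and liminf_{n→∞} p_n > 0, then I_{x_n}(p_n, q_n) → 1 as n → ∞. -/
open MeasureTheory Filter

open Set in

lemma aux_eq {p q : ℝ} (u : ℝ) (hu : u ∈ Set.Ioo (0:ℝ) 1) :
    (u:ℂ) ^ ((p:ℂ)-1) * (1-(u:ℂ)) ^ ((q:ℂ)-1)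
      = ((u ^ (p-1) * (1-u) ^ (q-1) : ℝ) : ℂ) := by
  obtain ⟨h0, h1⟩ := hu
  push_cast
  rw [Complex.ofReal_cpow h0.le, Complex.ofReal_cpow (by linarith)]
  push_cast
  ring

lemma integrableOn_beta {p q : ℝ} (hp : 0 < p) (hq : 0 < q) :
    IntegrableOn (fun u : ℝ => u ^ (p-1) * (1-u) ^ (q-1)) (Set.Ioo 0 1) := by
  have h := (Complex.betaIntegral_convergent (u := p) (v := q) (by simpa) (by simpa))
  rw [intervalIntegrable_iff_integrableOn_Ioc_of_le zero_le_one] at h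
  have h2 := (h.mono_set Set.Ioo_subset_Ioc_self).re
  refine MeasureTheory.IntegrableOn.congr_fun h2 (fun u hu => ?_) measurableSet_Ioo
  rw [aux_eq u hu]; exact Complex.ofReal_re _

lemma integral_beta_eq {p q : ℝ} (hp : 0 < p) (hq : 0 < q) :
    ∫ u in Set.Ioo (0:ℝ) 1, u ^ (p-1) * (1-u) ^ (q-1)
      = Real.Gamma p * Real.Gamma q / Real.Gamma (p+q) := by
  have hC : Complex.Gamma p * Complex.Gamma q
      = Complex.Gamma (p+q) * Complex.betaIntegral p q := by
    have := Complex.Gamma_mul_Gamma_eq_betaIntegral (s := p) (t := q) (by simpa) (by simpa)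
    simpa using this
  have hB : Complex.betaIntegral p q
      = ((∫ u in Set.Ioo (0:ℝ) 1, u ^ (p-1) * (1-u) ^ (q-1) : ℝ) : ℂ) := by
    rw [Complex.betaIntegral, intervalIntegral.integral_of_le zero_le_one,
      MeasureTheory.integral_Ioc_eq_integral_Ioo]
    rw [setIntegral_congr_fun measurableSet_Ioo (fun u hu => aux_eq u hu)]
    exact integral_ofReal
  rw [hB] at hC
  have hGpos : 0 < Real.Gamma (p+q) := Real.Gamma_pos_of_pos (by linarith)
  have : (↑(Real.Gamma p * Real.Gamma q) : ℂ)
      = ↑(Real.Gamma (p+q) * ∫ u in Set.Ioo (0:ℝ) 1, u ^ (p-1) * (1-u) ^ (q-1)) := by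
    push_cast [← Complex.Gamma_ofReal]
    simpa using hC
  have := Complex.ofReal_injective this
  field_simp
  linarith [this]

open Set in
lemma regIncBeta_bounds {p q x : ℝ} (hp : 0 < p) (hq : 0 < q) (hx : 0 < x) :
    1 - (p/(p+q))/x ≤ regIncBeta p q x ∧ regIncBeta p q x ≤ 1 := by
  have hpq : 0 < p + q := by linarith
  set f : ℝ → ℝ := fun u => u ^ (p-1) * (1-u) ^ (q-1) with hf
  set B : ℝ := ∫ u in Set.Ioo (0:ℝ) 1, f u with hBdef
  have hBpos : 0 < B := by
    rw [hBdef, integral_beta_eq hp hq]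
    have := Real.Gamma_pos_of_pos hp
    have := Real.Gamma_pos_of_pos hq
    have := Real.Gamma_pos_of_pos hpq
    positivity
  set μ : ℝ := p/(p+q) with hμdef
  have hμpos : 0 < μ := by positivity
  -- the mean integral
  have hg_eq : Set.EqOn (fun u : ℝ => u ^ ((p+1)-1) * (1-u) ^ (q-1))
      (fun u : ℝ => u * f u) (Set.Ioo 0 1) := by
    intro u hu
    simp only [hf]
    rw [show (p+1)-1 = (p-1)+1 by ring, Real.rpow_add hu.1, Real.rpow_one]
    ring
  have hg_int : IntegrableOn (fun u : ℝ => u * f u) (Set.Ioo 0 1) :=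
    (integrableOn_beta (by linarith : (0:ℝ) < p+1) hq).congr_fun hg_eq measurableSet_Ioo
  have hg_val : ∫ u in Set.Ioo (0:ℝ) 1, u * f u = μ * B := by
    rw [← setIntegral_congr_fun measurableSet_Ioo hg_eq,
      integral_beta_eq (by linarith : (0:ℝ) < p+1) hq,
      Real.Gamma_add_one hp.ne', show p+1+q = (p+q)+1 by ring,
      Real.Gamma_add_one hpq.ne', hBdef, hf, integral_beta_eq hp hq, hμdef]
    have h1 := (Real.Gamma_pos_of_pos hpq).ne'
    field_simp
  rcases le_or_gt 1 x with hx1 | hx1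
  · rw [regIncBeta, min_eq_right hx1]
    rw [div_self hBpos.ne']
    constructor
    · have : 0 ≤ μ/x := by positivity
      simpa [hμdef] using by linarith
    · exact le_refl 1
  · rw [regIncBeta, min_eq_left hx1.le]
    have hsub : Set.Ioo x 1 ⊆ Set.Ioo (0:ℝ) 1 := Set.Ioo_subset_Ioo hx.le le_rfl
    set R : ℝ := ∫ u in Set.Ioo x 1, f u with hRdef
    have hsplit : B = (∫ u in Set.Ioo (0:ℝ) x, f u) + R := by
      have h1 : (∫ u in Set.Ico x 1, f u) = R := MeasureTheory.integral_Ico_eq_integral_Ioo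
      rw [hBdef, ← Set.Ioo_union_Ico_eq_Ioo hx hx1.le,
        setIntegral_union (Set.Ico_disjoint_Ico_same.mono_left Set.Ioo_subset_Ico_self) measurableSet_Ico
          ((integrableOn_beta hp hq).mono_set (Set.Ioo_subset_Ioo le_rfl hx1.le))
          ((integrableOn_beta hp hq).mono_set (Set.Ico_subset_Ioo_left hx)), h1]
    have hRnn : 0 ≤ R := by
      refine setIntegral_nonneg measurableSet_Ioo (fun u hu => ?_)
      have h0 : (0:ℝ) ≤ u := le_trans hx.le hu.1.le
      have h1 : (0:ℝ) ≤ 1 - u := by linarith [hu.2]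
      exact mul_nonneg (Real.rpow_nonneg h0 _) (Real.rpow_nonneg h1 _)
    have hRle : R ≤ μ * B / x := by
      have step1 : R ≤ ∫ u in Set.Ioo x 1, (1/x) * (u * f u) := by
        refine setIntegral_mono_on ((integrableOn_beta hp hq).mono_set hsub)
          ((hg_int.mono_set hsub).const_mul (1/x)) measurableSet_Ioo (fun u hu => ?_)
        have hu0 : (0:ℝ) < u := lt_trans hx hu.1
        have h1 : (0:ℝ) ≤ 1 - u := by linarith [hu.2]
        have hfnn : 0 ≤ f u :=
          mul_nonneg (Real.rpow_nonneg hu0.le _) (Real.rpow_nonneg h1 _)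
        rw [show (1/x) * (u * f u) = (u/x) * f u by ring]
        have : 1 ≤ u/x := (one_le_div hx).mpr hu.1.le
        nlinarith
      have step2 : ∫ u in Set.Ioo x 1, (1/x) * (u * f u)
          = (1/x) * ∫ u in Set.Ioo x 1, u * f u := integral_const_mul _ _
      have step3 : ∫ u in Set.Ioo x 1, u * f u ≤ ∫ u in Set.Ioo (0:ℝ) 1, u * f u := by
        refine setIntegral_mono_set hg_int ?_ hsub.eventuallyLE
        refine (ae_restrict_iff' measurableSet_Ioo).2 (Eventually.of_forall fun u hu => ?_)
        have h1 : (0:ℝ) ≤ 1 - u := by linarith [hu.2]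
        exact mul_nonneg hu.1.le
          (mul_nonneg (Real.rpow_nonneg hu.1.le _) (Real.rpow_nonneg h1 _))
      calc R ≤ (1/x) * ∫ u in Set.Ioo x 1, u * f u := by rw [← step2]; exact step1
        _ ≤ (1/x) * ∫ u in Set.Ioo (0:ℝ) 1, u * f u := by
            apply mul_le_mul_of_nonneg_left step3 (by positivity)
        _ = μ * B / x := by rw [hg_val]; ring
    have hIB : (∫ u in Set.Ioo (0:ℝ) x, f u) = B - R := by linarith
    rw [hIB]
    constructor
    · rw [le_div_iff₀ hBpos]
      have : μ * B / x = μ / x * B := by ring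
      nlinarith
    · rw [div_le_one hBpos]
      linarith

/-- If `x_n/μ_n → ∞` with `μ_n = p_n/(p_n+q_n)` and `liminf p_n > 0`,
then `I_{x_n}(p_n,q_n) → 1`. -/
theorem regIncBeta_tendsto_one_of_ratio_top
    (p q : ℕ → ℝ) (x : ℕ → ℝ) (hp : ∀ n, 0 < p n) (hq : ∀ n, 0 < q n)
    (hratio : Tendsto (fun n => x n / (p n / (p n + q n))) atTop atTop)
    (hliminf : 0 < Filter.liminf (fun n => (p n : EReal)) atTop) :
    Tendsto (fun n => regIncBeta (p n) (q n) (x n)) atTop (nhds 1) := by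
  have hμpos : ∀ n, 0 < p n / (p n + q n) := fun n => by
    have := hp n; have := hq n; positivity
  have hxpos : ∀ᶠ n in atTop, 0 < x n := by
    filter_upwards [hratio.eventually_ge_atTop 1] with n hn
    have := hμpos n
    have h2 := (le_div_iff₀ this).mp hn
    linarith
  have hinv : Tendsto (fun n => (p n / (p n + q n)) / x n) atTop (nhds 0) := by
    have h := hratio.inv_tendsto_atTop
    have heq : (fun n => x n / (p n / (p n + q n)))⁻¹
        = fun n => (p n / (p n + q n)) / x n := by
      funext n; simp [Pi.inv_apply, inv_div]
    rwa [heq] at h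
  have hlow : Tendsto (fun n => 1 - (p n / (p n + q n)) / x n) atTop (nhds 1) := by
    simpa using tendsto_const_nhds.sub hinv
  refine tendsto_of_tendsto_of_tendsto_of_le_of_le' hlow tendsto_const_nhds ?_ ?_
  · filter_upwards [hxpos] with n hn
    exact (regIncBeta_bounds (hp n) (hq n) hn).1
  · filter_upwards [hxpos] with n hn
    exact (regIncBeta_bounds (hp n) (hq n) hn).2
end

section
/- Let (p_n), (q_n) be sequences of positive reals and (x_n) a sequence of reals, and set μ_n = p_n/(p_n + q_n). If liminf_{n→∞} x_n/μ_n > 1 and p_n → ∞ as n → ∞, then I_{x_n}(p_n, q_n) → 1 as n → ∞. -/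
open MeasureTheory Filter

open Set


lemma betaInt_cpow_eq {u : ℝ} (hu0 : 0 < u) (hu1 : u ≤ 1) (p q : ℝ) :
    (u : ℂ) ^ ((p:ℂ) - 1) * (1 - (u : ℂ)) ^ ((q:ℂ) - 1)
      = ((u ^ (p - 1) * (1 - u) ^ (q - 1) : ℝ) : ℂ) := by
  have h1 : ((u : ℂ)) ^ ((p:ℂ) - 1) = ((u ^ (p - 1) : ℝ) : ℂ) := by
    rw [Complex.ofReal_cpow hu0.le]; push_cast; ring_nf
  have h2 : (1 - (u : ℂ)) ^ ((q:ℂ) - 1) = (((1 - u) ^ (q - 1) : ℝ) : ℂ) := by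
    rw [Complex.ofReal_cpow (by linarith : (0:ℝ) ≤ 1 - u)]; push_cast; ring_nf
  simp [h1, h2, ← Complex.ofReal_mul]

lemma betaInt_integrableOn {p q : ℝ} (hp : 0 < p) (hq : 0 < q) :
    IntegrableOn (fun u : ℝ => u ^ (p - 1) * (1 - u) ^ (q - 1)) (Set.Ioo 0 1) := by
  have hC := (Complex.betaIntegral_convergent (u := (p:ℂ)) (v := (q:ℂ)) (by simpa) (by simpa)).1
  have hC' : IntegrableOn (fun x : ℝ => (x:ℂ) ^ ((p:ℂ) - 1) * (1 - (x:ℂ)) ^ ((q:ℂ) - 1))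
      (Set.Ioo 0 1) := hC.mono_set Set.Ioo_subset_Ioc_self
  have hre : IntegrableOn (fun x : ℝ =>
      ((x:ℂ) ^ ((p:ℂ) - 1) * (1 - (x:ℂ)) ^ ((q:ℂ) - 1)).re) (Set.Ioo 0 1) := hC'.re
  refine hre.congr_fun (fun u hu => ?_) measurableSet_Ioo
  dsimp only; rw [betaInt_cpow_eq hu.1 hu.2.le, Complex.ofReal_re]

lemma betaInt_coe {p q : ℝ} (hp : 0 < p) (hq : 0 < q) :
    ((∫ u in Set.Ioo (0:ℝ) 1, u ^ (p - 1) * (1 - u) ^ (q - 1) : ℝ) : ℂ)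
      = Complex.betaIntegral p q := by
  have key : (∫ x in Set.Ioc (0:ℝ) 1, ((x:ℂ) ^ ((p:ℂ)-1) * (1-(x:ℂ)) ^ ((q:ℂ)-1)))
      = ∫ x in Set.Ioc (0:ℝ) 1, ((x ^ (p-1) * (1-x) ^ (q-1) : ℝ) : ℂ) :=
    setIntegral_congr_fun measurableSet_Ioc (fun u hu => betaInt_cpow_eq hu.1 hu.2 p q)
  rw [Complex.betaIntegral, intervalIntegral.integral_of_le zero_le_one, key,
    ← MeasureTheory.integral_Ioc_eq_integral_Ioo]
  exact (integral_ofReal (𝕜 := ℂ)).symm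

noncomputable def Dint (p q : ℝ) : ℝ := ∫ u in Set.Ioo (0:ℝ) 1, u ^ (p - 1) * (1 - u) ^ (q - 1)

lemma Dint_pos {p q : ℝ} (hp : 0 < p) (hq : 0 < q) : 0 < Dint p q := by
  have hInt : IntervalIntegrable (fun u : ℝ => u ^ (p - 1) * (1 - u) ^ (q - 1)) volume 0 1 := by
    constructor
    · exact (betaInt_integrableOn hp hq).congr_set_ae (MeasureTheory.Ioo_ae_eq_Ioc (a := (0:ℝ)) (b := 1)).symm
    · rw [Set.Ioc_eq_empty (by norm_num)]; exact integrableOn_empty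
  have h := intervalIntegral.intervalIntegral_pos_of_pos_on hInt (fun u hu => by
    have := Real.rpow_pos_of_pos hu.1 (p - 1)
    have := Real.rpow_pos_of_pos (by linarith [hu.2] : (0:ℝ) < 1 - u) (q - 1)
    positivity) one_pos
  rwa [intervalIntegral.integral_of_le zero_le_one,
    MeasureTheory.integral_Ioc_eq_integral_Ioo] at h

lemma Dint_rec {p q : ℝ} (hp : 0 < p) (hq : 0 < q) :
    (p + q) * Dint (p + 1) q = p * Dint p q := by
  have h1 : Dint p q = Dint (p + 1) q + Dint p (q + 1) := by
    have hcong : ∀ u ∈ Set.Ioo (0:ℝ) 1,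
        u ^ (p - 1) * (1 - u) ^ (q - 1)
          = u ^ (p + 1 - 1) * (1 - u) ^ (q - 1) + u ^ (p - 1) * (1 - u) ^ (q + 1 - 1) := by
      intro u hu
      have e1 : u ^ (p + 1 - 1) = u ^ (p - 1) * u := by
        rw [show p + 1 - 1 = (p - 1) + 1 by ring, Real.rpow_add hu.1, Real.rpow_one]
      have e2 : (1 - u) ^ (q + 1 - 1) = (1 - u) ^ (q - 1) * (1 - u) := by
        rw [show q + 1 - 1 = (q - 1) + 1 by ring,
          Real.rpow_add (by linarith [hu.2] : (0:ℝ) < 1 - u), Real.rpow_one]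
      rw [e1, e2]; ring
    calc Dint p q = ∫ u in Set.Ioo (0:ℝ) 1,
          (u ^ (p + 1 - 1) * (1 - u) ^ (q - 1) + u ^ (p - 1) * (1 - u) ^ (q + 1 - 1)) :=
        setIntegral_congr_fun measurableSet_Ioo hcong
      _ = Dint (p + 1) q + Dint p (q + 1) :=
        integral_add (betaInt_integrableOn (by linarith) hq) (betaInt_integrableOn hp (by linarith))
  have h2 : p * Dint p (q + 1) = q * Dint (p + 1) q := by
    have hrec := Complex.betaIntegral_recurrence (u := (p:ℂ)) (v := (q:ℂ)) (by simpa) (by simpa)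
    have e : ((p * Dint p (q + 1) : ℝ) : ℂ) = ((q * Dint (p + 1) q : ℝ) : ℂ) := by
      push_cast
      rw [Dint, Dint, betaInt_coe hp (by linarith), betaInt_coe (by linarith) hq]
      convert hrec using 3 <;> push_cast <;> ring
    exact_mod_cast e
  nlinarith [h1, h2]

lemma Dint_tail_le {p q x : ℝ} (hp : 0 < p) (hq : 0 < q)
    (hx : p / (p + q) < x) (hx1 : x ≤ 1) :
    ∫ u in Set.Ico x 1, u ^ (p - 1) * (1 - u) ^ (q - 1)
      ≤ (x - p / (p + q))⁻¹ ^ 2 *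
        ((p / (p + q)) * (1 - p / (p + q)) / (p + q + 1)) * Dint p q := by
  set μ := p / (p + q) with hμdef
  have hpq : 0 < p + q := by linarith
  have hμ0 : 0 < μ := div_pos hp hpq
  have hμ1 : μ < 1 := by rw [hμdef, div_lt_one hpq]; linarith
  have hx0 : 0 < x := lt_trans hμ0 hx
  have hsub : Set.Ico x 1 ⊆ Set.Ioo 0 1 := fun u hu => ⟨lt_of_lt_of_le hx0 hu.1, hu.2⟩
  set f : ℝ → ℝ := fun u => u ^ (p - 1) * (1 - u) ^ (q - 1) with hfdef
  set g : ℝ → ℝ := fun u => (u - μ) ^ 2 * f u with hgdef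
  have hfpos : ∀ u ∈ Set.Ioo (0:ℝ) 1, 0 < f u := fun u hu => by
    have := Real.rpow_pos_of_pos hu.1 (p - 1)
    have := Real.rpow_pos_of_pos (by linarith [hu.2] : (0:ℝ) < 1 - u) (q - 1)
    positivity
  -- expansion of g on Ioo 0 1
  have hexp : ∀ u ∈ Set.Ioo (0:ℝ) 1,
      g u = u ^ (p + 2 - 1) * (1 - u) ^ (q - 1)
        - 2 * μ * (u ^ (p + 1 - 1) * (1 - u) ^ (q - 1))
        + μ ^ 2 * (u ^ (p - 1) * (1 - u) ^ (q - 1)) := by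
    intro u hu
    have e1 : u ^ (p + 1 - 1) = u ^ (p - 1) * u := by
      rw [show p + 1 - 1 = (p - 1) + 1 by ring, Real.rpow_add hu.1, Real.rpow_one]
    have e2 : u ^ (p + 2 - 1) = u ^ (p - 1) * (u * u) := by
      rw [show p + 2 - 1 = ((p - 1) + 1) + 1 by ring, Real.rpow_add hu.1, Real.rpow_add hu.1,
        Real.rpow_one]
      ring
    simp only [hgdef, hfdef, e1, e2]
    ring
  have hint2 : IntegrableOn (fun u : ℝ => u ^ (p + 2 - 1) * (1 - u) ^ (q - 1)) (Set.Ioo 0 1) :=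
    betaInt_integrableOn (by linarith) hq
  have hint1 : IntegrableOn (fun u : ℝ => u ^ (p + 1 - 1) * (1 - u) ^ (q - 1)) (Set.Ioo 0 1) :=
    betaInt_integrableOn (by linarith) hq
  have hint0 : IntegrableOn f (Set.Ioo 0 1) := betaInt_integrableOn hp hq
  have hgint : IntegrableOn g (Set.Ioo 0 1) := by
    refine IntegrableOn.congr_fun ?_ (fun u hu => (hexp u hu).symm) measurableSet_Ioo
    exact (hint2.sub (hint1.const_mul _)).add (hint0.const_mul _)
  -- value of ∫ g over Ioo 0 1
  have hDA : (p + q) * Dint (p + 1) q = p * Dint p q := Dint_rec hp hq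
  have hAB : (p + 1 + q) * Dint (p + 1 + 1) q = (p + 1) * Dint (p + 1) q :=
    Dint_rec (by linarith) hq
  have hA : Dint (p + 1) q = p / (p + q) * Dint p q := by
    field_simp
    linarith [hDA]
  have hB : Dint (p + 2) q = (p + 1) / (p + q + 1) * Dint (p + 1) q := by
    rw [show p + 2 = p + 1 + 1 by ring]
    have h1 : (0:ℝ) < p + 1 + q := by linarith
    field_simp
    linarith [hAB]
  have hgval : ∫ u in Set.Ioo (0:ℝ) 1, g u = μ * (1 - μ) / (p + q + 1) * Dint p q := by
    have : ∫ u in Set.Ioo (0:ℝ) 1, g u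
        = Dint (p + 2) q - 2 * μ * Dint (p + 1) q + μ ^ 2 * Dint p q := by
      rw [setIntegral_congr_fun measurableSet_Ioo hexp]
      rw [integral_add
          (f := fun u : ℝ => u ^ (p + 2 - 1) * (1 - u) ^ (q - 1)
            - 2 * μ * (u ^ (p + 1 - 1) * (1 - u) ^ (q - 1)))
          (g := fun u : ℝ => μ ^ 2 * (u ^ (p - 1) * (1 - u) ^ (q - 1)))
          (hint2.sub (hint1.const_mul _)) (hint0.const_mul _),
        integral_sub (f := fun u : ℝ => u ^ (p + 2 - 1) * (1 - u) ^ (q - 1))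
          (g := fun u : ℝ => 2 * μ * (u ^ (p + 1 - 1) * (1 - u) ^ (q - 1)))
          hint2 (hint1.const_mul _),
        integral_const_mul, integral_const_mul]
      have e2 : Dint (p + 2) q = ∫ u in Set.Ioo (0:ℝ) 1, u ^ (p + 2 - 1) * (1 - u) ^ (q - 1) := by
        rfl
      have e1 : Dint (p + 1) q = ∫ u in Set.Ioo (0:ℝ) 1, u ^ (p + 1 - 1) * (1 - u) ^ (q - 1) := by
        rfl
      rw [e1, e2, Dint]
    rw [this, hB, hA, hμdef]
    have h1 : (0:ℝ) < p + q + 1 := by linarith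
    field_simp
    ring
  -- Chebyshev
  have hxm : 0 < x - μ := by linarith
  have step1 : ∫ u in Set.Ico x 1, f u ≤ ∫ u in Set.Ico x 1, (x - μ)⁻¹ ^ 2 * g u := by
    refine setIntegral_mono_on (hint0.mono_set hsub) ((hgint.mono_set hsub).const_mul _)
      measurableSet_Ico (fun u hu => ?_)
    have hu' := hsub hu
    have hum : x - μ ≤ u - μ := by have := hu.1; linarith
    have h1 : (x - μ) ^ 2 ≤ (u - μ) ^ 2 := by nlinarith
    have hf' := (hfpos u hu').le
    have key : (x - μ) ^ 2 * f u ≤ g u := by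
      rw [hgdef]
      exact mul_le_mul_of_nonneg_right h1 hf'
    calc f u = (x - μ)⁻¹ ^ 2 * ((x - μ) ^ 2 * f u) := by
          rw [← mul_assoc, ← mul_pow, inv_mul_cancel₀ hxm.ne', one_pow, one_mul]
      _ ≤ (x - μ)⁻¹ ^ 2 * g u := mul_le_mul_of_nonneg_left key (by positivity)
  have step2 : ∫ u in Set.Ico x 1, (x - μ)⁻¹ ^ 2 * g u
      ≤ ∫ u in Set.Ioo (0:ℝ) 1, (x - μ)⁻¹ ^ 2 * g u := by
    refine setIntegral_mono_set (hgint.const_mul _) ?_ (HasSubset.Subset.eventuallyLE hsub)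
    refine (ae_restrict_iff' measurableSet_Ioo).2 (Filter.Eventually.of_forall fun u hu => ?_)
    have h1 := (hfpos u hu).le
    rw [hgdef]
    positivity
  have step3 : ∫ u in Set.Ioo (0:ℝ) 1, (x - μ)⁻¹ ^ 2 * g u
      = (x - μ)⁻¹ ^ 2 * (μ * (1 - μ) / (p + q + 1)) * Dint p q := by
    rw [integral_const_mul, hgval]; ring
  calc ∫ u in Set.Ico x 1, f u ≤ ∫ u in Set.Ico x 1, (x - μ)⁻¹ ^ 2 * g u := step1
    _ ≤ ∫ u in Set.Ioo (0:ℝ) 1, (x - μ)⁻¹ ^ 2 * g u := step2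
    _ = (x - μ)⁻¹ ^ 2 * (μ * (1 - μ) / (p + q + 1)) * Dint p q := step3

lemma regIncBeta_le_one {p q x : ℝ} (hp : 0 < p) (hq : 0 < q) :
    regIncBeta p q x ≤ 1 := by
  rw [regIncBeta, show (∫ u in Set.Ioo (0:ℝ) 1, u ^ (p-1) * (1-u) ^ (q-1)) = Dint p q from rfl,
    div_le_one (Dint_pos hp hq)]
  refine setIntegral_mono_set (betaInt_integrableOn hp hq) ?_
    (HasSubset.Subset.eventuallyLE (Set.Ioo_subset_Ioo le_rfl (min_le_right x 1)))
  refine (ae_restrict_iff' measurableSet_Ioo).2 (Filter.Eventually.of_forall fun u hu => ?_)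
  have h1 := Real.rpow_pos_of_pos hu.1 (p - 1)
  have h2 := Real.rpow_pos_of_pos (by linarith [hu.2] : (0:ℝ) < 1 - u) (q - 1)
  positivity

lemma regIncBeta_lower {p q x r : ℝ} (hp : 0 < p) (hq : 0 < q) (hr : 1 < r)
    (hx : r < x / (p / (p + q))) :
    1 - 1 / ((r - 1) ^ 2 * p) ≤ regIncBeta p q x := by
  set μ := p / (p + q) with hμdef
  have hpq : 0 < p + q := by linarith
  have hμ0 : 0 < μ := div_pos hp hpq
  have hμ1 : μ < 1 := by rw [hμdef, div_lt_one hpq]; linarith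
  have hrx : r * μ < x := (lt_div_iff₀ hμ0).1 hx
  have hμx : μ < x := by nlinarith
  have hb0 : 0 < (r - 1) ^ 2 * p := mul_pos (pow_pos (by linarith) 2) hp
  have hD := Dint_pos hp hq
  rcases le_or_gt 1 x with h1x | h1x
  · rw [regIncBeta, min_eq_right h1x]
    rw [show (∫ u in Set.Ioo (0:ℝ) 1, u ^ (p-1) * (1-u) ^ (q-1)) = Dint p q from rfl,
      div_self hD.ne']
    have : 0 < 1 / ((r - 1) ^ 2 * p) := by positivity
    linarith
  · -- x < 1
    have hx0 : 0 < x := lt_trans hμ0 hμx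
    have hsplit : Dint p q = (∫ u in Set.Ioo (0:ℝ) x, u ^ (p-1) * (1-u) ^ (q-1))
        + ∫ u in Set.Ico x 1, u ^ (p-1) * (1-u) ^ (q-1) := by
      rw [Dint, ← Set.Ioo_union_Ico_eq_Ioo hx0 h1x.le]
      exact setIntegral_union (Set.disjoint_left.2 fun u hu hu' => hu.2.not_ge hu'.1) measurableSet_Ico
        ((betaInt_integrableOn hp hq).mono_set
          (Set.Ioo_subset_Ioo le_rfl h1x.le))
        ((betaInt_integrableOn hp hq).mono_set
          (fun u hu => ⟨lt_of_lt_of_le hx0 hu.1, hu.2⟩))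
    have htail := Dint_tail_le hp hq hμx h1x.le
    -- bound the coefficient
    have hcoef : (x - μ)⁻¹ ^ 2 * (μ * (1 - μ) / (p + q + 1)) ≤ 1 / ((r - 1) ^ 2 * p) := by
      have hrm : 0 < (r - 1) * μ := by nlinarith
      have h1 : (x - μ)⁻¹ ≤ ((r - 1) * μ)⁻¹ := by
        apply inv_anti₀ hrm
        nlinarith
      have h2 : (x - μ)⁻¹ ^ 2 ≤ ((r - 1) * μ)⁻¹ ^ 2 := by
        have := inv_nonneg.2 (by nlinarith : (0:ℝ) ≤ x - μ)
        exact pow_le_pow_left₀ this h1 2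
      have h3 : (x - μ)⁻¹ ^ 2 * (μ * (1 - μ) / (p + q + 1))
          ≤ ((r - 1) * μ)⁻¹ ^ 2 * (μ * (1 - μ) / (p + q + 1)) := by
        apply mul_le_mul_of_nonneg_right h2
        have h1μ : (0:ℝ) < 1 - μ := by linarith
        positivity
      have habs : ∀ s m w z : ℝ, s ≠ 0 → m ≠ 0 → w ≠ 0 →
          ((s * m)⁻¹) ^ 2 * (m * z / w) = z / (s ^ 2 * (m * w)) := by
        intro s m w z hs hm hw
        field_simp
      have hkey : ((r - 1) * μ)⁻¹ ^ 2 * (μ * (1 - μ) / (p + q + 1))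
          = (1 - μ) / ((r - 1) ^ 2 * (μ * (p + q + 1))) :=
        habs (r - 1) μ (p + q + 1) (1 - μ) (by linarith) hμ0.ne' (by linarith)
      have hμp : p ≤ μ * (p + q + 1) := by
        have : μ * (p + q) = p := by rw [hμdef]; field_simp
        nlinarith
      have hfinal : (1 - μ) / ((r - 1) ^ 2 * (μ * (p + q + 1))) ≤ 1 / ((r - 1) ^ 2 * p) := by
        exact div_le_div₀ zero_le_one (by linarith) hb0
          (mul_le_mul_of_nonneg_left hμp (by positivity))
      calc (x - μ)⁻¹ ^ 2 * (μ * (1 - μ) / (p + q + 1))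
          ≤ ((r - 1) * μ)⁻¹ ^ 2 * (μ * (1 - μ) / (p + q + 1)) := h3
        _ = (1 - μ) / ((r - 1) ^ 2 * (μ * (p + q + 1))) := hkey
        _ ≤ 1 / ((r - 1) ^ 2 * p) := hfinal
    have htail' : ∫ u in Set.Ico x 1, u ^ (p-1) * (1-u) ^ (q-1)
        ≤ 1 / ((r - 1) ^ 2 * p) * Dint p q := by
      calc ∫ u in Set.Ico x 1, u ^ (p-1) * (1-u) ^ (q-1)
          ≤ (x - μ)⁻¹ ^ 2 * (μ * (1 - μ) / (p + q + 1)) * Dint p q := htail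
        _ ≤ 1 / ((r - 1) ^ 2 * p) * Dint p q :=
          mul_le_mul_of_nonneg_right hcoef hD.le
    rw [regIncBeta, min_eq_left h1x.le]
    rw [show (∫ u in Set.Ioo (0:ℝ) 1, u ^ (p-1) * (1-u) ^ (q-1)) = Dint p q from rfl]
    rw [le_div_iff₀ hD]
    nlinarith [htail', hsplit]

/-- If `liminf x_n/μ_n > 1` with `μ_n = p_n/(p_n+q_n)` and `p_n → ∞`,
then `I_{x_n}(p_n,q_n) → 1`. -/
theorem regIncBeta_tendsto_one_of_liminf_ratio_gt_one
    (p q : ℕ → ℝ) (x : ℕ → ℝ) (hp : ∀ n, 0 < p n) (hq : ∀ n, 0 < q n)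
    (hliminf : 1 < Filter.liminf (fun n => ((x n / (p n / (p n + q n))) : EReal)) atTop)
    (hptop : Tendsto p atTop atTop) :
    Tendsto (fun n => regIncBeta (p n) (q n) (x n)) atTop (nhds 1) := by
  obtain ⟨c, hc1, hcl⟩ := exists_between hliminf
  have hcev : ∀ᶠ n in atTop, c < ((x n / (p n / (p n + q n))) : EReal) :=
    Filter.eventually_lt_of_lt_liminf hcl
  have hctop : c ≠ ⊤ := (lt_of_lt_of_le hcl le_top).ne
  have hcbot : c ≠ ⊥ := ne_bot_of_gt hc1
  set r : ℝ := c.toReal with hrdef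
  have hcr : c = (r : EReal) := (EReal.coe_toReal hctop hcbot).symm
  have hr1 : 1 < r := by
    rw [hcr] at hc1
    exact_mod_cast hc1
  have hev : ∀ᶠ n in atTop, r < x n / (p n / (p n + q n)) := by
    filter_upwards [hcev] with n hn
    rw [hcr, ← EReal.coe_add, ← EReal.coe_div, ← EReal.coe_div, EReal.coe_lt_coe_iff] at hn
    exact hn
  have hlow : ∀ᶠ n in atTop, 1 - 1 / ((r - 1) ^ 2 * p n) ≤ regIncBeta (p n) (q n) (x n) := by
    filter_upwards [hev] with n hn
    exact regIncBeta_lower (hp n) (hq n) hr1 hn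
  have hup : ∀ᶠ n in atTop, regIncBeta (p n) (q n) (x n) ≤ 1 :=
    Filter.Eventually.of_forall fun n => regIncBeta_le_one (hp n) (hq n)
  have hbt : Tendsto (fun n => 1 - 1 / ((r - 1) ^ 2 * p n)) atTop (nhds 1) := by
    have h1 : Tendsto (fun n => (r - 1) ^ 2 * p n) atTop atTop :=
      hptop.const_mul_atTop (pow_pos (by linarith) 2)
    have h2 : Tendsto (fun n => 1 / ((r - 1) ^ 2 * p n)) atTop (nhds 0) := by
      simpa only [one_div, Pi.inv_def] using h1.inv_tendsto_atTop
    have := (tendsto_const_nhds (x := (1:ℝ)) (f := atTop)).sub h2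
    simpa using this
  exact tendsto_of_tendsto_of_tendsto_of_le_of_le' hbt tendsto_const_nhds hlow hup
end

section
/- Let (p_n), (q_n) be sequences of positive reals and (x_n) a sequence of reals, and set μ_n = p_n/(p_n + q_n). If limsup_{n→∞} x_n/μ_n < 1 and p_n → ∞ as n → ∞, then I_{x_n}(p_n, q_n) → 0 as n → ∞. -/
set_option maxHeartbeats 1000000

open MeasureTheory Filter

section Aux
open Set intervalIntegral

lemma betaKer_intble_left {p : ℝ} (q : ℝ) (hp : 0 < p) :
    IntervalIntegrable (fun u : ℝ => u ^ (p - 1) * (1 - u) ^ (q - 1)) volume 0 (1 / 2) := by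
  apply IntervalIntegrable.mul_continuousOn
  · exact intervalIntegrable_rpow' (by linarith)
  · apply ContinuousOn.rpow_const (by fun_prop)
    intro u hu
    rw [uIcc_of_le (by norm_num : (0:ℝ) ≤ 1/2)] at hu
    left
    intro h
    have := hu.2
    norm_num at this h
    linarith

lemma betaKer_intble {p q : ℝ} (hp : 0 < p) (hq : 0 < q) :
    IntervalIntegrable (fun u : ℝ => u ^ (p - 1) * (1 - u) ^ (q - 1)) volume 0 1 := by
  refine (betaKer_intble_left q hp).trans ?_
  rw [IntervalIntegrable.iff_comp_neg]
  convert ((betaKer_intble_left p hq).comp_add_right 1).symm using 1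
  · ext1 x
    conv_lhs => rw [mul_comm]
    congr 2 <;> ring
  · norm_num
  · norm_num

lemma betaInt_pos {p q : ℝ} (hp : 0 < p) (hq : 0 < q) :
    0 < ∫ u in Ioo (0:ℝ) 1, u ^ (p - 1) * (1 - u) ^ (q - 1) := by
  have h := intervalIntegral_pos_of_pos_on (betaKer_intble hp hq)
    (fun u hu => by
      have h1 : (0:ℝ) < 1 - u := by linarith [hu.2]
      have h0 := hu.1
      positivity) one_pos
  rwa [integral_of_le zero_le_one, integral_Ioc_eq_integral_Ioo] at h

lemma beta_ratio_bound {p q x y : ℝ} (hp : 0 < p) (hq : 0 < q)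
    (hx : 0 < x) (hxy : x < y) (hy : y < 1) :
    (∫ u in Ioo (0:ℝ) x, u ^ (p - 1) * (1 - u) ^ (q - 1)) ≤
      (x / y) ^ p * max 1 (((1 - x) / (1 - y)) ^ (q - 1)) *
        ∫ u in Ioo (0:ℝ) y, u ^ (p - 1) * (1 - u) ^ (q - 1) := by
  set f : ℝ → ℝ := fun u => u ^ (p - 1) * (1 - u) ^ (q - 1) with hf
  have hy0 : 0 < y := hx.trans hxy
  set d : ℝ := x / y with hd
  have hd0 : 0 < d := div_pos hx hy0
  have hd1 : d < 1 := (div_lt_one hy0).2 hxy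
  have hyxd : y = x / d := by field_simp [hd]; rw [hd]; field_simp
  set K : ℝ := max 1 (((1 - x) / (1 - y)) ^ (q - 1)) with hK
  have hK1 : (1:ℝ) ≤ K := le_max_left _ _
  have hK0 : (0:ℝ) ≤ K := by linarith
  have h1y : 0 < 1 - y := by linarith
  -- pointwise bound on [0, x]
  have hpt : ∀ u ∈ Icc (0:ℝ) x, f u ≤ d ^ (p - 1) * K * f (u / d) := by
    intro u hu
    obtain ⟨hu0, hux⟩ := hu
    have hudy : u / d ≤ y := by
      rw [hyxd]
      gcongr
    have h1ud : 0 < 1 - u / d := by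
      have : u / d ≤ y := hudy
      linarith
    have h1u : 0 < 1 - u := by
      have : u < 1 := lt_of_le_of_lt hux (hxy.trans hy)
      linarith
    have hud0 : 0 ≤ u / d := div_nonneg hu0 hd0.le
    have hbase : u ^ (p - 1) = d ^ (p - 1) * (u / d) ^ (p - 1) := by
      rw [← Real.mul_rpow hd0.le hud0, mul_div_cancel₀ u hd0.ne']
    have hsecond : (1 - u) ^ (q - 1) ≤ K * (1 - u / d) ^ (q - 1) := by
      rcases le_or_gt 1 q with hq1 | hq1
      · have hratio : (1 - u) / (1 - u / d) ≤ (1 - x) / (1 - y) := by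
          rw [div_le_div_iff₀ h1ud h1y]
          have hcalc : (1 - x) * (1 - u / d) - (1 - u) * (1 - y) = (x - u) * (1 - d) / d := by
            rw [hyxd]; field_simp; ring
          nlinarith [div_nonneg (mul_nonneg (by linarith : (0:ℝ) ≤ x - u)
            (by linarith : (0:ℝ) ≤ 1 - d)) hd0.le]
        calc (1 - u) ^ (q - 1)
            = ((1 - u) / (1 - u / d) * (1 - u / d)) ^ (q - 1) := by
              rw [div_mul_cancel₀ _ h1ud.ne']
          _ = ((1 - u) / (1 - u / d)) ^ (q - 1) * (1 - u / d) ^ (q - 1) :=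
              Real.mul_rpow (by positivity) h1ud.le
          _ ≤ ((1 - x) / (1 - y)) ^ (q - 1) * (1 - u / d) ^ (q - 1) :=
              mul_le_mul_of_nonneg_right
                (Real.rpow_le_rpow (div_nonneg h1u.le h1ud.le) hratio (by linarith))
                (by positivity)
          _ ≤ K * (1 - u / d) ^ (q - 1) :=
              mul_le_mul_of_nonneg_right (le_max_right _ _) (by positivity)
      · have h1 : (1 - u) ^ (q - 1) ≤ (1 - u / d) ^ (q - 1) := by
          apply Real.rpow_le_rpow_of_nonpos h1ud _ (by linarith)
          have hdu : u ≤ u / d := by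
            rw [le_div_iff₀ hd0]
            nlinarith
          linarith
        calc (1 - u) ^ (q - 1) ≤ (1 - u / d) ^ (q - 1) := h1
          _ = 1 * (1 - u / d) ^ (q - 1) := (one_mul _).symm
          _ ≤ K * (1 - u / d) ^ (q - 1) :=
              mul_le_mul_of_nonneg_right hK1 (by positivity)
    calc f u = u ^ (p - 1) * (1 - u) ^ (q - 1) := rfl
      _ = d ^ (p - 1) * ((u / d) ^ (p - 1) * (1 - u) ^ (q - 1)) := by rw [hbase]; ring
      _ ≤ d ^ (p - 1) * ((u / d) ^ (p - 1) * (K * (1 - u / d) ^ (q - 1))) :=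
          mul_le_mul_of_nonneg_left
            (mul_le_mul_of_nonneg_left hsecond (by positivity)) (by positivity)
      _ = d ^ (p - 1) * K * f (u / d) := by simp only [hf]; ring
  -- integrability
  have hint1 : IntervalIntegrable f volume 0 x :=
    (betaKer_intble hp hq).mono_set (by
      rw [uIcc_of_le hx.le, uIcc_of_le zero_le_one]
      exact Icc_subset_Icc le_rfl (by linarith))
  have hinty : IntervalIntegrable f volume 0 y :=
    (betaKer_intble hp hq).mono_set (by
      rw [uIcc_of_le hy0.le, uIcc_of_le zero_le_one]
      exact Icc_subset_Icc le_rfl hy.le)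
  have hint2 : IntervalIntegrable (fun u => f (u / d)) volume 0 x := by
    have h := hinty.comp_mul_right (c := d⁻¹)
    have h0 : (0:ℝ) / d⁻¹ = 0 := by simp
    have hyy : y / d⁻¹ = x := by
      rw [div_eq_mul_inv, inv_inv, hyxd, div_mul_cancel₀ _ hd0.ne']
    rw [h0, hyy] at h
    simpa [div_eq_mul_inv] using h
  calc (∫ u in Ioo (0:ℝ) x, f u) = ∫ u in (0:ℝ)..x, f u := by
        rw [integral_of_le hx.le, integral_Ioc_eq_integral_Ioo]
    _ ≤ ∫ u in (0:ℝ)..x, d ^ (p - 1) * K * f (u / d) :=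
        integral_mono_on hx.le hint1 (hint2.const_mul _) hpt
    _ = d ^ (p - 1) * K * ∫ u in (0:ℝ)..x, f (u / d) := integral_const_mul _ _
    _ = d ^ (p - 1) * K * (d * ∫ u in (0:ℝ)..y, f u) := by
        rw [integral_comp_div f hd0.ne']
        norm_num
        rw [show x / d = y from hyxd.symm]
        simp [smul_eq_mul]
    _ = d ^ p * K * ∫ u in (0:ℝ)..y, f u := by
        rw [show d ^ (p-1) * K * (d * ∫ u in (0:ℝ)..y, f u)
              = (d ^ (p-1) * d ^ (1:ℝ)) * K * ∫ u in (0:ℝ)..y, f u by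
            rw [Real.rpow_one]; ring,
          ← Real.rpow_add hd0]
        norm_num
    _ = (x / y) ^ p * K * ∫ u in Ioo (0:ℝ) y, f u := by
        rw [integral_of_le hy0.le, integral_Ioc_eq_integral_Ioo]

lemma betaInt_mono {p q y : ℝ} (hp : 0 < p) (hq : 0 < q) (hy1 : y ≤ 1) :
    (∫ u in Ioo (0:ℝ) y, u ^ (p - 1) * (1 - u) ^ (q - 1)) ≤
      ∫ u in Ioo (0:ℝ) 1, u ^ (p - 1) * (1 - u) ^ (q - 1) := by
  apply setIntegral_mono_set
  · exact ((intervalIntegrable_iff_integrableOn_Ioc_of_le zero_le_one).1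
      (betaKer_intble hp hq)).mono_set Ioo_subset_Ioc_self
  · rw [EventuallyLE, ae_restrict_iff' measurableSet_Ioo]
    filter_upwards with u hu
    have h0 := hu.1
    have h1 : (0:ℝ) ≤ 1 - u := by linarith [hu.2]
    positivity
  · exact HasSubset.Subset.eventuallyLE (Ioo_subset_Ioo_right hy1)

lemma regIncBeta_nonneg {p q x : ℝ} (hp : 0 < p) (hq : 0 < q) :
    0 ≤ regIncBeta p q x := by
  apply div_nonneg _ (betaInt_pos hp hq).le
  apply setIntegral_nonneg measurableSet_Ioo
  intro u hu
  have h0 := hu.1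
  have h1 : (0:ℝ) ≤ 1 - u := by linarith [lt_of_lt_of_le hu.2 (min_le_right _ _)]
  positivity

/-- If `limsup x_n/μ_n < 1` with `μ_n = p_n/(p_n+q_n)` and `p_n → ∞`,
then `I_{x_n}(p_n,q_n) → 0`. -/
theorem regIncBeta_tendsto_zero_of_limsup_ratio_lt_one
    (p q : ℕ → ℝ) (x : ℕ → ℝ) (hp : ∀ n, 0 < p n) (hq : ∀ n, 0 < q n)
    (hlimsup : Filter.limsup (fun n => ((x n / (p n / (p n + q n))) : EReal)) atTop < 1)
    (hptop : Tendsto p atTop atTop) :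
    Tendsto (fun n => regIncBeta (p n) (q n) (x n)) atTop (nhds 0) := by
  -- extract a real constant c ∈ (1/2, 1) with eventually x n / μ n < c
  have h12 : ((1/2 : ℝ) : EReal) < 1 := by
    rw [show (1 : EReal) = ((1:ℝ) : EReal) from rfl, EReal.coe_lt_coe_iff]
    norm_num
  have hmax : max (Filter.limsup (fun n => ((x n / (p n / (p n + q n))) : EReal)) atTop)
      ((1/2 : ℝ) : EReal) < 1 := max_lt hlimsup h12
  obtain ⟨c, hc1, hc2⟩ := EReal.exists_between_coe_real hmax
  have hchalf : (1/2 : ℝ) < c := by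
    have := (le_max_right _ ((1/2 : ℝ) : EReal)).trans_lt hc1
    exact_mod_cast this
  have hc1' : c < 1 := by
    rw [show (1 : EReal) = ((1:ℝ) : EReal) from rfl, EReal.coe_lt_coe_iff] at hc2
    exact hc2
  have hc0 : 0 < c := by linarith
  have hev : ∀ᶠ n in atTop, x n / (p n / (p n + q n)) < c := by
    have := eventually_lt_of_limsup_lt ((le_max_left _ _).trans_lt hc1)
    filter_upwards [this] with n hn
    rw [← EReal.coe_add, ← EReal.coe_div, ← EReal.coe_div, EReal.coe_lt_coe_iff] at hn
    exact hn
  -- set up the constants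
  set d : ℝ := (1 + c) / 2 with hdd
  have hcd : c < d := by rw [hdd]; linarith
  have hd1 : d < 1 := by rw [hdd]; linarith
  have hd0 : 0 < d := by rw [hdd]; linarith
  have he1 : c / d < 1 := (div_lt_one hd0).2 hcd
  have he0 : 0 < c / d := div_pos hc0 hd0
  have hneg : Real.log d + c / d * (1 - d) < 0 := by
    have hlog : Real.log d < d - 1 := Real.log_lt_sub_one_of_pos hd0 (by linarith)
    nlinarith [mul_pos (by linarith : (0:ℝ) < 1 - d) (by linarith : (0:ℝ) < 1 - c / d)]
  -- the dominating sequence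
  have hBtend : Tendsto (fun n => Real.exp ((Real.log d + c / d * (1 - d)) * p n))
      atTop (nhds 0) := by
    apply Real.tendsto_exp_atBot.comp
    exact Tendsto.const_mul_atTop_of_neg hneg hptop
  apply tendsto_of_tendsto_of_tendsto_of_le_of_le' tendsto_const_nhds hBtend
  · exact Eventually.of_forall fun n => regIncBeta_nonneg (hp n) (hq n)
  · filter_upwards [hev] with n hn
    set P := p n with hP
    set Q := q n with hQ
    set X := x n with hX
    clear_value P Q X
    have hP0 : 0 < P := hP ▸ hp n
    have hQ0 : 0 < Q := hQ ▸ hq n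
    have hS0 : 0 < P + Q := by linarith
    have hμ0 : 0 < P / (P + Q) := div_pos hP0 hS0
    have hμ1 : P / (P + Q) < 1 := (div_lt_one hS0).2 (by linarith)
    have hxc : X < c * (P / (P + Q)) := (div_lt_iff₀ hμ0).1 hn
    have hF1 : 0 < ∫ u in Ioo (0:ℝ) 1, u ^ (P - 1) * (1 - u) ^ (Q - 1) :=
      betaInt_pos hP0 hQ0
    rcases le_or_gt X 0 with hX0 | hX0
    · have : regIncBeta P Q X = 0 := by
        unfold regIncBeta
        rw [min_eq_left (by linarith), Ioo_eq_empty (by linarith), Measure.restrict_empty, integral_zero_measure, zero_div]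
      rw [this]
      positivity
    · have hXc : X < c * (P / (P + Q)) := hxc
      have hX1 : X < 1 := by nlinarith
      set Y : ℝ := X / d with hY
      have hXY : X < Y := by
        rw [hY, lt_div_iff₀ hd0]
        nlinarith
      have hYe : Y < (c / d) * (P / (P + Q)) := by
        rw [hY, div_lt_iff₀ hd0]
        calc X < c * (P / (P + Q)) := hXc
          _ = c / d * (P / (P + Q)) * d := by field_simp
      have hY1 : Y < 1 := by nlinarith
      have h1Y : 0 < 1 - Y := by linarith
      have h1X : 0 < 1 - X := by linarith
      have hXYd : X / Y = d := by
        rw [hY]; field_simp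
      have hmain := beta_ratio_bound hP0 hQ0 hX0 hXY hY1
      rw [hXYd] at hmain
      have hFmono := betaInt_mono hP0 hQ0 (le_of_lt hY1) (p := P) (q := Q)
      set K : ℝ := max 1 (((1 - X) / (1 - Y)) ^ (Q - 1)) with hKdef
      have hK0 : (0:ℝ) ≤ K := le_trans zero_le_one (le_max_left _ _)
      have hdP0 : (0:ℝ) ≤ d ^ P := Real.rpow_nonneg hd0.le P
      -- regIncBeta ≤ d^P * K
      have hIle : regIncBeta P Q X ≤ d ^ P * K := by
        unfold regIncBeta
        rw [min_eq_left hX1.le, div_le_iff₀ hF1]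
        calc (∫ u in Ioo (0:ℝ) X, u ^ (P - 1) * (1 - u) ^ (Q - 1))
            ≤ d ^ P * K * ∫ u in Ioo (0:ℝ) Y, u ^ (P - 1) * (1 - u) ^ (Q - 1) := hmain
          _ ≤ d ^ P * K * ∫ u in Ioo (0:ℝ) 1, u ^ (P - 1) * (1 - u) ^ (Q - 1) :=
              mul_le_mul_of_nonneg_left hFmono (by positivity)
      -- bound K
      have hexp0 : 0 ≤ c / d * (1 - d) * P :=
        mul_nonneg (mul_nonneg he0.le (by linarith)) hP0.le
      have hKle : K ≤ Real.exp (c / d * (1 - d) * P) := by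
        apply max_le (Real.one_le_exp hexp0)
        have hR1 : (1:ℝ) ≤ (1 - X) / (1 - Y) := (le_div_iff₀ h1Y).2 (by linarith)
        have hR0 : 0 < (1 - X) / (1 - Y) := by positivity
        rw [Real.rpow_def_of_pos hR0]
        apply Real.exp_le_exp.2
        have hlogR : Real.log ((1 - X) / (1 - Y)) ≤ (1 - X) / (1 - Y) - 1 :=
          Real.log_le_sub_one_of_pos hR0
        have hlogR0 : 0 ≤ Real.log ((1 - X) / (1 - Y)) := Real.log_nonneg hR1
        have hRm1 : (1 - X) / (1 - Y) - 1 = (Y - X) / (1 - Y) := by field_simp; ring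
        -- key arithmetic: Q * ((Y - X)/(1-Y)) ≤ c/d * (1-d) * P
        have hXdY : X = d * Y := by rw [hY]; field_simp
        have hY0' : 0 < Y := hX0.trans hXY
        have hYS : Y * (P + Q) ≤ c / d * P := by
          rw [← le_div_iff₀ hS0]
          calc Y ≤ c / d * (P / (P + Q)) := hYe.le
            _ = c / d * P / (P + Q) := by ring
        have harith : Q * ((Y - X) / (1 - Y)) ≤ c / d * (1 - d) * P := by
          rw [mul_div_assoc', div_le_iff₀ h1Y]
          nlinarith [mul_le_mul_of_nonneg_left hYS (by linarith : (0:ℝ) ≤ 1 - d),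
            mul_nonneg (mul_nonneg (mul_nonneg (by linarith : (0:ℝ) ≤ 1 - d) hY0'.le)
              hP0.le) (by linarith : (0:ℝ) ≤ 1 - c / d)]
        calc Real.log ((1 - X) / (1 - Y)) * (Q - 1)
            ≤ Real.log ((1 - X) / (1 - Y)) * Q :=
              mul_le_mul_of_nonneg_left (by linarith) hlogR0
          _ ≤ ((1 - X) / (1 - Y) - 1) * Q := mul_le_mul_of_nonneg_right hlogR hQ0.le
          _ = Q * ((Y - X) / (1 - Y)) := by rw [hRm1]; ring
          _ ≤ c / d * (1 - d) * P := harith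
      calc regIncBeta P Q X ≤ d ^ P * K := hIle
        _ ≤ d ^ P * Real.exp (c / d * (1 - d) * P) :=
            mul_le_mul_of_nonneg_left hKle hdP0
        _ = Real.exp ((Real.log d + c / d * (1 - d)) * P) := by
            rw [Real.rpow_def_of_pos hd0, ← Real.exp_add]
            ring_nf

end Aux
end

section
/- Let (d,k) be an admissible pair of integers. Then ∫_0^1 x² f_{d,k}(x) dx = π^{(d−k)/2} · Γ((2k−d−1)/2) / Γ((k−1)/2). -/
open MeasureTheory

/-- The Lévy density `f_{d,k}(x) = (ω_{d−k}/(k−1)) x^{−1−(d−1)/(k−1)} (1−x^{2/(k−1)})^{(d−k)/2−1}`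
on `(0,1)`, where `ω_b = 2π^{b/2}/Γ(b/2)`. -/
noncomputable def levyDensity (d k : ℕ) (x : ℝ) : ℝ :=
  2 * Real.pi ^ (((d : ℝ) - k) / 2) / Real.Gamma (((d : ℝ) - k) / 2) / ((k : ℝ) - 1) *
    x ^ (-1 - ((d : ℝ) - 1) / ((k : ℝ) - 1)) *
    (1 - x ^ (2 / ((k : ℝ) - 1))) ^ (((d : ℝ) - k) / 2 - 1)

lemma beta_real {a b : ℝ} (ha : 0 < a) (hb : 0 < b) :
    ∫ x in Set.Ioo (0:ℝ) 1, x ^ (a - 1) * (1 - x) ^ (b - 1) =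
      Real.Gamma a * Real.Gamma b / Real.Gamma (a + b) := by
  have h1 : Complex.betaIntegral a b =
      ((∫ x in (0:ℝ)..1, x ^ (a - 1) * (1 - x) ^ (b - 1)) : ℝ) := by
    rw [Complex.betaIntegral, ← intervalIntegral.integral_ofReal]
    refine intervalIntegral.integral_congr fun x hx => ?_
    rw [Set.uIcc_of_le zero_le_one] at hx
    push_cast
    rw [Complex.ofReal_cpow hx.1, Complex.ofReal_cpow (by linarith [hx.2])]
    push_cast
    ring
  have h2 := Complex.Gamma_mul_Gamma_eq_betaIntegral (s := (a:ℂ)) (t := (b:ℂ))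
    (by simpa using ha) (by simpa using hb)
  rw [h1] at h2
  have hab : (0:ℝ) < Real.Gamma (a + b) := Real.Gamma_pos_of_pos (by linarith)
  have h3 : Real.Gamma a * Real.Gamma b =
      Real.Gamma (a + b) * ∫ x in (0:ℝ)..1, x ^ (a - 1) * (1 - x) ^ (b - 1) := by
    rw [Complex.Gamma_ofReal, Complex.Gamma_ofReal, ← Complex.ofReal_add,
      Complex.Gamma_ofReal, ← Complex.ofReal_mul, ← Complex.ofReal_mul] at h2
    exact_mod_cast h2
  rw [intervalIntegral.integral_of_le zero_le_one,
    MeasureTheory.integral_Ioc_eq_integral_Ioo] at h3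
  rw [h3]
  field_simp


/-- For an admissible pair `(d,k)` (i.e. `1 ≤ k ≤ d−1` and `2k > d+1`), the second moment of the
Lévy measure is `∫_0^1 x² f_{d,k}(x) dx = π^{(d−k)/2} Γ((2k−d−1)/2)/Γ((k−1)/2)`. -/
theorem secondMoment_levyDensity (d k : ℕ)
    (hk : 1 ≤ k) (hkd : k + 1 ≤ d) (hadm : d + 1 < 2 * k) :
    ∫ x in Set.Ioo (0 : ℝ) 1, x ^ 2 * levyDensity d k x =
      Real.pi ^ (((d : ℝ) - k) / 2) * Real.Gamma ((2 * (k : ℝ) - d - 1) / 2) /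
        Real.Gamma (((k : ℝ) - 1) / 2) := by
  have hk3 : 3 ≤ k := by omega
  have hkR : (3:ℝ) ≤ (k:ℝ) := by exact_mod_cast hk3
  have hdR : (k:ℝ) + 1 ≤ (d:ℝ) := by exact_mod_cast hkd
  have haR : (d:ℝ) + 1 < 2 * k := by exact_mod_cast hadm
  set m : ℝ := (k:ℝ) - 1 with hm_def
  have hm0 : (0:ℝ) < m := by simp only [hm_def]; linarith
  have hm0' : m ≠ 0 := hm0.ne'
  set a : ℝ := (2 * (k:ℝ) - d - 1) / 2 with ha_def
  set b : ℝ := ((d:ℝ) - k) / 2 with hb_def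
  have ha : 0 < a := by simp only [ha_def]; linarith
  have hb : 0 < b := by simp only [hb_def]; linarith
  have hab : a + b = ((k:ℝ) - 1) / 2 := by simp only [ha_def, hb_def]; ring
  have himg : Set.Ioo (0:ℝ) 1 = (fun u : ℝ => u ^ (m / 2)) '' Set.Ioo 0 1 := by
    ext x
    constructor
    · rintro ⟨hx0, hx1⟩
      refine ⟨x ^ (2 / m), ⟨Real.rpow_pos_of_pos hx0 _,
        Real.rpow_lt_one hx0.le hx1 (by positivity)⟩, ?_⟩
      show (x ^ (2 / m)) ^ (m / 2) = x
      rw [← Real.rpow_mul hx0.le, show 2 / m * (m / 2) = 1 by field_simp, Real.rpow_one]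
    · rintro ⟨u, ⟨hu0, hu1⟩, rfl⟩
      exact ⟨Real.rpow_pos_of_pos hu0 _, Real.rpow_lt_one hu0.le hu1 (by positivity)⟩
  have hderiv : ∀ u ∈ Set.Ioo (0:ℝ) 1,
      HasDerivWithinAt (fun u : ℝ => u ^ (m / 2))
        (m / 2 * u ^ (m / 2 - 1)) (Set.Ioo 0 1) u := fun u hu =>
    (Real.hasDerivAt_rpow_const (Or.inl hu.1.ne')).hasDerivWithinAt
  have hinj : Set.InjOn (fun u : ℝ => u ^ (m / 2)) (Set.Ioo 0 1) := by
    have : StrictMonoOn (fun u : ℝ => u ^ (m / 2)) (Set.Ioo 0 1) :=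
      fun x hx y _ hxy => Real.rpow_lt_rpow hx.1.le hxy (by positivity)
    exact this.injOn
  rw [himg, integral_image_eq_integral_abs_deriv_smul measurableSet_Ioo hderiv hinj]
  set C : ℝ := 2 * Real.pi ^ b / Real.Gamma b / m with hC_def
  have hcongr : ∀ u ∈ Set.Ioo (0:ℝ) 1,
      |m / 2 * u ^ (m / 2 - 1)| •
        ((u ^ (m / 2)) ^ 2 * levyDensity d k (u ^ (m / 2))) =
      C * (m / 2) * (u ^ (a - 1) * (1 - u) ^ (b - 1)) := by
    rintro u ⟨hu0, hu1⟩
    have hx0 : (0:ℝ) < u ^ (m / 2) := Real.rpow_pos_of_pos hu0 _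
    have habs : |m / 2 * u ^ (m / 2 - 1)| = m / 2 * u ^ (m / 2 - 1) := by
      rw [abs_of_pos]; positivity
    have hpow2 : (u ^ (m / 2)) ^ (2 / m) = u := by
      rw [← Real.rpow_mul hu0.le, show m / 2 * (2 / m) = 1 by field_simp, Real.rpow_one]
    rw [smul_eq_mul, habs, levyDensity, ← hm_def, ← hb_def, ← hC_def, hpow2,
      ← Real.rpow_natCast (u ^ (m / 2)) 2, ← Real.rpow_mul hu0.le, ← Real.rpow_mul hu0.le,
      show a - 1 = (m / 2 * ((2:ℕ):ℝ)) + (m / 2 * (-1 - ((d:ℝ) - 1) / m)) + (m / 2 - 1) by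
        simp only [ha_def, hm_def] at hm0' ⊢; push_cast; field_simp; ring,
      Real.rpow_add hu0, Real.rpow_add hu0]
    ring
  rw [MeasureTheory.setIntegral_congr_fun measurableSet_Ioo hcongr,
    MeasureTheory.integral_const_mul, beta_real ha hb, hab, hC_def]
  have hgb : Real.Gamma b ≠ 0 := (Real.Gamma_pos_of_pos hb).ne'
  have hgab : Real.Gamma (((k:ℝ) - 1) / 2) ≠ 0 :=
    (Real.Gamma_pos_of_pos (by linarith)).ne'
  field_simp
  ring
end
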